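/- Let x ∈ ℝ^m have support N := {i : x_i ≠ 0}, let T ⊆ {1,…,m} with Δ := N \ T nonempty, and let y = A x + w with ‖w‖₂ ≤ ε. Assume |T| ≤ S_T and |Δ| ≤ S_Δ. Let b := max_{i∈Δ}|x_i|, fix γ ∈ (0,1], let Δ₁ := {i ∈ Δ : |x_i| ≥ γ·b} and Δ₂ := Δ \ Δ₁, and assume |Δ₁| ≤ S_{Δ1} and ‖x_{Δ₂}‖₂ ≤ κ·b. Let x̂_init be the LS estimate on T from y, ỹ := y − A·x̂_init, β̂ any minimizer of ‖β‖₁ over {β ∈ ℝ^m : ‖ỹ − Aβ‖₂ ≤ ε}, and x̂_CSres := x̂_init + β̂. Suppose some δ < (√2 − 1)/2 is a 2S_Δ-restricted isometry bound for A, some δ′ < 1/2 is an S_T-restricted isometry bound for A, and θ is an (S_T, S_Δ)-restricted orthogonality bound for A. Set C′ := C₁(δ) + √2·C₂(δ)·√(S_T/|Δ|) and C″ := 2·C₂(δ)·√S_T. If θ·C″ ≤ γ/(2(√S_{Δ1} + κ)) and α_add + C′·ε < (γ − θ·C″·(√S_{Δ1} + κ))·b, then every i ∈ Δ₁ satisfies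 |x̂_{CSres,i}| > α_add, i.e., every element of Δ₁ is detected by the threshold-α_add addition step. -/

import Mathlib

open Finset

attribute [local instance] Classical.propDecidable

/-- Euclidean (ℓ2) norm of a finite real vector. -/
noncomputable def norm2 {k : ℕ} (v : Fin k → ℝ) : ℝ := Real.sqrt (∑ i, v i ^ 2)

/-- ℓ∞ norm (maximum absolute entry) of a finite real vector. -/
noncomputable def normInf {k : ℕ} (v : Fin k → ℝ) : ℝ := ⨆ i, |v i|

/-- Support of a vector, as a finset. -/
noncomputable def spt {k : ℕ} (v : Fin k → ℝ) : Finset (Fin k) :=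
  Finset.univ.filter (fun i => v i ≠ 0)

/-- Restriction of a vector to the coordinates indexed by `T` (zero elsewhere). -/
noncomputable def restr {k : ℕ} (T : Finset (Fin k)) (v : Fin k → ℝ) : Fin k → ℝ :=
  fun i => if i ∈ T then v i else 0

/-- `δ ∈ [0,1)` is an `S`-restricted isometry bound for `A`:
`(1-δ)‖z‖² ≤ ‖Az‖² ≤ (1+δ)‖z‖²` for every `z` with at most `S` nonzero entries. -/
def RIPBound {n m : ℕ} (A : Matrix (Fin n) (Fin m) ℝ) (S : ℕ) (δ : ℝ) : Prop :=
  0 ≤ δ ∧ δ < 1 ∧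
    ∀ z : Fin m → ℝ, (spt z).card ≤ S →
      (1 - δ) * (∑ i, z i ^ 2) ≤ (∑ j, (A.mulVec z) j ^ 2) ∧
      (∑ j, (A.mulVec z) j ^ 2) ≤ (1 + δ) * (∑ i, z i ^ 2)

/-- `θ ≥ 0` is an `(S,S')`-restricted orthogonality bound for `A`:
`|⟨Az, Az'⟩| ≤ θ‖z‖‖z'‖` for all `z, z'` with disjoint supports of cardinalities `≤ S, S'`. -/
def ROBound {n m : ℕ} (A : Matrix (Fin n) (Fin m) ℝ) (S S' : ℕ) (θ : ℝ) : Prop :=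
  0 ≤ θ ∧
    ∀ z z' : Fin m → ℝ, Disjoint (spt z) (spt z') →
      (spt z).card ≤ S → (spt z').card ≤ S' →
      |∑ j, (A.mulVec z) j * (A.mulVec z') j| ≤ θ * norm2 z * norm2 z'

/-- A modified-CS estimate with known part `T`: feasible and with minimal ℓ1 norm outside `T`
among all feasible vectors. -/
def ModCS {n m : ℕ} (A : Matrix (Fin n) (Fin m) ℝ) (y : Fin n → ℝ) (ε : ℝ)
    (T : Finset (Fin m)) (xhat : Fin m → ℝ) : Prop :=
  norm2 (fun j => y j - (A.mulVec xhat) j) ≤ ε ∧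
    ∀ β : Fin m → ℝ, norm2 (fun j => y j - (A.mulVec β) j) ≤ ε →
      ∑ i ∈ Tᶜ, |xhat i| ≤ ∑ i ∈ Tᶜ, |β i|

/-- The LS estimate on `T` from `y`: supported on `T` and satisfying the normal equations
`A_Tᵀ (y - A x̂) = 0` (equivalently `x̂_T = (A_Tᵀ A_T)⁻¹ A_Tᵀ y` when `A_T` has
full column rank). -/
def IsLS {n m : ℕ} (A : Matrix (Fin n) (Fin m) ℝ) (y : Fin n → ℝ)
    (T : Finset (Fin m)) (xhat : Fin m → ℝ) : Prop :=
  (∀ i, i ∉ T → xhat i = 0) ∧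
    ∀ i ∈ T, (∑ j, A j i * (y j - (A.mulVec xhat) j)) = 0

/-- `C₁(δ) = 4√(1+δ)/(1-(√2+1)δ)`. -/
noncomputable def C1 (δ : ℝ) : ℝ := 4 * Real.sqrt (1 + δ) / (1 - (Real.sqrt 2 + 1) * δ)

/-- `C₂(δ) = 2(1+(√2-1)δ)/(1-(√2+1)δ)`. -/
noncomputable def C2 (δ : ℝ) : ℝ := 2 * (1 + (Real.sqrt 2 - 1) * δ) / (1 - (Real.sqrt 2 + 1) * δ)







section NormLemmas
variable {k : ℕ}

noncomputable def toE {k : ℕ} (v : Fin k → ℝ) : EuclideanSpace ℝ (Fin k) :=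
  (WithLp.equiv 2 (Fin k → ℝ)).symm v

lemma norm2_eq_norm (v : Fin k → ℝ) : norm2 v = ‖toE v‖ := by
  rw [EuclideanSpace.norm_eq]
  simp [norm2, toE, Real.norm_eq_abs, sq_abs]

lemma inner_toE (u v : Fin k → ℝ) : (inner ℝ (toE u) (toE v) : ℝ) = ∑ i, u i * v i := by
  simp [toE, PiLp.inner_apply, RCLike.inner_apply, mul_comm]

lemma norm2_nonneg (v : Fin k → ℝ) : 0 ≤ norm2 v := Real.sqrt_nonneg _

lemma sq_norm2 (v : Fin k → ℝ) : norm2 v ^ 2 = ∑ i, v i ^ 2 := by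
  rw [norm2, Real.sq_sqrt]
  positivity

lemma norm2_le_of_sq_le {v : Fin k → ℝ} {c : ℝ} (hc : 0 ≤ c)
    (h : ∑ i, v i ^ 2 ≤ c ^ 2) : norm2 v ≤ c := by
  rw [norm2]
  calc Real.sqrt (∑ i, v i ^ 2) ≤ Real.sqrt (c ^ 2) := Real.sqrt_le_sqrt h
  _ = c := Real.sqrt_sq hc

lemma abs_sum_mul_le (u v : Fin k → ℝ) :
    |∑ i, u i * v i| ≤ norm2 u * norm2 v := by
  rw [norm2_eq_norm, norm2_eq_norm, ← inner_toE]
  exact abs_real_inner_le_norm _ _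

lemma norm2_add_le (u v : Fin k → ℝ) :
    norm2 (fun i => u i + v i) ≤ norm2 u + norm2 v := by
  have : toE (fun i => u i + v i) = toE u + toE v := rfl
  rw [norm2_eq_norm, norm2_eq_norm, norm2_eq_norm, this]
  exact norm_add_le _ _



section Chunk2
variable {k : ℕ}

variable {k : ℕ}


lemma mem_spt {v : Fin k → ℝ} {i : Fin k} : i ∈ spt v ↔ v i ≠ 0 := by
  simp [spt]

lemma spt_restr_subset (B : Finset (Fin k)) (v : Fin k → ℝ) : spt (restr B v) ⊆ B := by
  intro i hi
  rw [mem_spt] at hi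
  by_contra h
  simp [restr, h] at hi

lemma restr_apply_mem {B : Finset (Fin k)} {v : Fin k → ℝ} {i : Fin k} (h : i ∈ B) :
    restr B v i = v i := if_pos h

lemma restr_apply_not_mem {B : Finset (Fin k)} {v : Fin k → ℝ} {i : Fin k} (h : i ∉ B) :
    restr B v i = 0 := if_neg h

lemma sum_restr_eq (B : Finset (Fin k)) (v : Fin k → ℝ) (f : ℝ → ℝ) (hf : f 0 = 0) :
    ∑ i, f (restr B v i) = ∑ i ∈ B, f (v i) := by
  rw [← Finset.sum_subset (Finset.subset_univ B) (fun i _ hi => by rw [restr_apply_not_mem hi, hf])]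
  exact Finset.sum_congr rfl (fun i hi => by rw [restr_apply_mem hi])

lemma sq_sum_restr (B : Finset (Fin k)) (v : Fin k → ℝ) :
    ∑ i, (restr B v i) ^ 2 = ∑ i ∈ B, v i ^ 2 :=
  sum_restr_eq B v (fun t => t ^ 2) (by norm_num)

lemma abs_sum_restr (B : Finset (Fin k)) (v : Fin k → ℝ) :
    ∑ i, |restr B v i| = ∑ i ∈ B, |v i| :=
  sum_restr_eq B v (fun t => |t|) (by norm_num)

lemma restr_union_of_disjoint {B C : Finset (Fin k)} (h : Disjoint B C) (v : Fin k → ℝ) :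
    restr (B ∪ C) v = fun i => restr B v i + restr C v i := by
  funext i
  by_cases hB : i ∈ B
  · have hC : i ∉ C := Finset.disjoint_left.mp h hB
    simp [restr, hB, hC]
  · by_cases hC : i ∈ C <;> simp [restr, hB, hC]

lemma coord_le_norm2 (v : Fin k → ℝ) (i : Fin k) : |v i| ≤ norm2 v := by
  rw [norm2, ← Real.sqrt_sq_eq_abs]
  apply Real.sqrt_le_sqrt
  exact Finset.single_le_sum (f := fun j => v j ^ 2) (fun j _ => sq_nonneg _) (Finset.mem_univ i)

lemma norm2_nonneg' (v : Fin k → ℝ) : 0 ≤ norm2 v := Real.sqrt_nonneg _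

lemma sq_norm2' (v : Fin k → ℝ) : norm2 v ^ 2 = ∑ i, v i ^ 2 := by
  rw [norm2, Real.sq_sqrt]; positivity

lemma norm2_le_of_sq_le' {v : Fin k → ℝ} {c : ℝ} (hc : 0 ≤ c)
    (h : ∑ i, v i ^ 2 ≤ c ^ 2) : norm2 v ≤ c := by
  rw [norm2]
  calc Real.sqrt (∑ i, v i ^ 2) ≤ Real.sqrt (c ^ 2) := Real.sqrt_le_sqrt h
  _ = c := Real.sqrt_sq hc

lemma l1_le_sqrt_card_mul_norm2 (B : Finset (Fin k)) (v : Fin k → ℝ) :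
    ∑ i ∈ B, |v i| ≤ Real.sqrt (B.card) * norm2 (restr B v) := by
  have h1 : (∑ i ∈ B, |v i|) ^ 2 ≤ (B.card : ℝ) * ∑ i ∈ B, |v i| ^ 2 :=
    sq_sum_le_card_mul_sum_sq
  have h2 : ∑ i ∈ B, |v i| ^ 2 = ∑ i ∈ B, v i ^ 2 := by
    exact Finset.sum_congr rfl (fun i _ => sq_abs _)
  have h3 : (∑ i ∈ B, |v i|) ^ 2 ≤ (Real.sqrt (B.card) * norm2 (restr B v)) ^ 2 := by
    rw [mul_pow, Real.sq_sqrt (Nat.cast_nonneg _), sq_norm2', sq_sum_restr]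
    rw [h2] at h1
    exact h1
  have h4 : 0 ≤ Real.sqrt (B.card) * norm2 (restr B v) := mul_nonneg (Real.sqrt_nonneg _) (norm2_nonneg' _)
  nlinarith [Finset.sum_nonneg (fun i (_ : i ∈ B) => abs_nonneg (v i))]

lemma norm2_restr_le_of_forall_le {B : Finset (Fin k)} {v : Fin k → ℝ} {c : ℝ} (hc : 0 ≤ c)
    (h : ∀ i ∈ B, |v i| ≤ c) : norm2 (restr B v) ≤ Real.sqrt (B.card) * c := by
  apply norm2_le_of_sq_le' (mul_nonneg (Real.sqrt_nonneg _) hc)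
  rw [sq_sum_restr, mul_pow, Real.sq_sqrt (Nat.cast_nonneg _)]
  calc ∑ i ∈ B, v i ^ 2 ≤ ∑ i ∈ B, c ^ 2 := by
        apply Finset.sum_le_sum
        intro i hi
        rw [← sq_abs]
        exact pow_le_pow_left₀ (abs_nonneg _) (h i hi) 2
  _ = B.card * c ^ 2 := by rw [Finset.sum_const, nsmul_eq_mul]


end Chunk2


section Chunk3
variable {n m : ℕ} {A : Matrix (Fin n) (Fin m) ℝ} {S : ℕ} {δ : ℝ}

lemma norm2_eq_zero {v : Fin k → ℝ} (h : norm2 v = 0) : v = 0 := by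
  funext i
  have h1 : |v i| ≤ 0 := h ▸ coord_le_norm2 v i
  have := abs_nonneg (v i)
  simp only [Pi.zero_apply]
  have : |v i| = 0 := le_antisymm h1 this
  exact abs_eq_zero.mp this

lemma spt_lincomb_subset (a b : ℝ) (u v : Fin m → ℝ) :
    spt (fun i => b * u i + a * v i) ⊆ spt u ∪ spt v := by
  intro i hi
  rw [mem_spt] at hi
  by_contra h
  simp only [Finset.mem_union, mem_spt] at h
  push_neg at h
  obtain ⟨h1, h2⟩ := h
  simp [h1, h2] at hi

lemma mulVec_lincomb (a b : ℝ) (u v : Fin m → ℝ) :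
    A.mulVec (fun i => b * u i + a * v i) = fun j => b * A.mulVec u j + a * A.mulVec v j := by
  have : (fun i => b * u i + a * v i) = b • u + a • v := rfl
  rw [this, Matrix.mulVec_add, Matrix.mulVec_smul, Matrix.mulVec_smul]
  rfl

/-- Restricted orthogonality from RIP by the parallelogram identity. -/
lemma rip_inner_le (hRIP : RIPBound A S δ) (u v : Fin m → ℝ)
    (hd : Disjoint (spt u) (spt v)) (hcard : (spt u).card + (spt v).card ≤ S) :
    |∑ j, A.mulVec u j * A.mulVec v j| ≤ δ * norm2 u * norm2 v := by
  obtain ⟨hδ0, hδ1, hrip⟩ := hRIP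
  set a := norm2 u with ha
  set b := norm2 v with hb
  by_cases hau : a = 0
  · have hu : u = 0 := norm2_eq_zero hau
    simp [hu, Matrix.mulVec_zero, hau]
  by_cases hbv : b = 0
  · have hv : v = 0 := norm2_eq_zero hbv
    simp [hv, Matrix.mulVec_zero, hbv]
  have ha0 : 0 < a := lt_of_le_of_ne (norm2_nonneg _) (Ne.symm hau)
  have hb0 : 0 < b := lt_of_le_of_ne (norm2_nonneg _) (Ne.symm hbv)
  have hcross : ∑ i, u i * v i = 0 := by
    apply Finset.sum_eq_zero
    intro i _
    by_cases hu : u i = 0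
    · rw [hu, zero_mul]
    · have : i ∈ spt u := mem_spt.mpr hu
      have : i ∉ spt v := Finset.disjoint_left.mp hd this
      rw [mem_spt, not_not] at this
      rw [this, mul_zero]
  have hsqu : ∑ i, u i ^ 2 = a ^ 2 := (sq_norm2 u).symm
  have hsqv : ∑ i, v i ^ 2 = b ^ 2 := (sq_norm2 v).symm
  -- p = b·u + a·v, q = b·u - a·v
  set p := fun i => b * u i + a * v i with hp
  set q := fun i => b * u i + (-a) * v i with hq
  have hsptp : (spt p).card ≤ S :=
    le_trans (Finset.card_le_card (spt_lincomb_subset a b u v))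
      (le_trans (Finset.card_union_le _ _) hcard)
  have hsptq : (spt q).card ≤ S :=
    le_trans (Finset.card_le_card (spt_lincomb_subset (-a) b u v))
      (le_trans (Finset.card_union_le _ _) hcard)
  have hpsq : ∑ i, p i ^ 2 = 2 * a ^ 2 * b ^ 2 := by
    have : ∀ i, p i ^ 2 = b^2 * u i ^2 + a^2 * v i ^2 + (2*a*b) * (u i * v i) := by
      intro i; simp only [hp]; ring
    rw [Finset.sum_congr rfl (fun i _ => this i), Finset.sum_add_distrib,
      Finset.sum_add_distrib, ← Finset.mul_sum, ← Finset.mul_sum, ← Finset.mul_sum,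
      hsqu, hsqv, hcross]
    ring
  have hqsq : ∑ i, q i ^ 2 = 2 * a ^ 2 * b ^ 2 := by
    have : ∀ i, q i ^ 2 = b^2 * u i ^2 + a^2 * v i ^2 + (-(2*a*b)) * (u i * v i) := by
      intro i; simp only [hq]; ring
    rw [Finset.sum_congr rfl (fun i _ => this i), Finset.sum_add_distrib,
      Finset.sum_add_distrib, ← Finset.mul_sum, ← Finset.mul_sum, ← Finset.mul_sum,
      hsqu, hsqv, hcross]
    ring
  have hAp := hrip p hsptp
  have hAq := hrip q hsptq
  rw [hpsq] at hAp
  rw [hqsq] at hAq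
  have hApv : A.mulVec p = fun j => b * A.mulVec u j + a * A.mulVec v j :=
    mulVec_lincomb a b u v
  have hAqv : A.mulVec q = fun j => b * A.mulVec u j + (-a) * A.mulVec v j :=
    mulVec_lincomb (-a) b u v
  have hdiff : ∑ j, A.mulVec p j ^ 2 - ∑ j, A.mulVec q j ^ 2
      = 4 * a * b * ∑ j, A.mulVec u j * A.mulVec v j := by
    rw [hApv, hAqv, ← Finset.sum_sub_distrib, Finset.mul_sum]
    exact Finset.sum_congr rfl (fun j _ => by ring)
  have hab : (0:ℝ) < 4 * a * b := by positivity
  have h1 : (4 * a * b) * ∑ j, A.mulVec u j * A.mulVec v j ≤ (4 * a * b) * (δ * norm2 u * norm2 v) := by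
    have e2 := hAp.2
    have e1 := hAq.1
    rw [← ha, ← hb]
    nlinarith [e2, e1, hdiff]
  have h2 : (4 * a * b) * (-(δ * norm2 u * norm2 v)) ≤ (4 * a * b) * ∑ j, A.mulVec u j * A.mulVec v j := by
    have e1 := hAp.1
    have e2 := hAq.2
    rw [← ha, ← hb]
    nlinarith [e1, e2, hdiff]
  rw [abs_le]
  exact ⟨le_of_mul_le_mul_left h2 hab, le_of_mul_le_mul_left h1 hab⟩

end Chunk3

section Chunk4
variable {k : ℕ}

/-- Relation between consecutive blocks. -/
def blockRel (h : Fin k → ℝ) (s : ℕ) (B B' : Finset (Fin k)) : Prop :=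
  (B'.Nonempty → B.card = s) ∧ ∀ i ∈ B, ∀ j ∈ B', |h j| ≤ |h i|

lemma topk_exists (h : Fin k → ℝ) : ∀ (c : ℕ) (R : Finset (Fin k)),
    ∃ B ⊆ R, B.card = min c R.card ∧ ∀ i ∈ B, ∀ j ∈ R \ B, |h j| ≤ |h i| := by
  intro c
  induction c with
  | zero => intro R; exact ⟨∅, Finset.empty_subset R, by simp, by simp⟩
  | succ c ih =>
    intro R
    rcases R.eq_empty_or_nonempty with hR | hR
    · exact ⟨∅, Finset.empty_subset R, by simp [hR], by simp⟩
    · obtain ⟨i₀, hi₀R, hi₀max⟩ := Finset.exists_max_image R (fun i => |h i|) hR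
      obtain ⟨B', hB'sub, hB'card, hB'dom⟩ := ih (R.erase i₀)
      refine ⟨insert i₀ B', ?_, ?_, ?_⟩
      · intro i hi
        rcases Finset.mem_insert.mp hi with rfl | hi
        · exact hi₀R
        · exact Finset.mem_of_mem_erase (hB'sub hi)
      · have hni : i₀ ∉ B' := fun hc => (Finset.mem_erase.mp (hB'sub hc)).1 rfl
        rw [Finset.card_insert_of_notMem hni, hB'card, Finset.card_erase_of_mem hi₀R]
        have hpos : 1 ≤ R.card := Finset.card_pos.mpr hR
        omega
      · intro i hi j hj
        rw [Finset.mem_sdiff] at hj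
        rcases Finset.mem_insert.mp hi with rfl | hi
        · exact hi₀max j hj.1
        · refine hB'dom i hi j ?_
          rw [Finset.mem_sdiff, Finset.mem_erase]
          refine ⟨⟨?_, hj.1⟩, ?_⟩
          · rintro rfl; exact hj.2 (Finset.mem_insert_self _ _)
          · intro hc; exact hj.2 (Finset.mem_insert_of_mem hc)

lemma subset_unionL {Bs : List (Finset (Fin k))} {B : Finset (Fin k)} (hB : B ∈ Bs) :
    B ⊆ Bs.foldr (· ∪ ·) ∅ := by
  induction Bs with
  | nil => simp at hB
  | cons B₀ tl ih =>
    rcases List.mem_cons.mp hB with rfl | hB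
    · exact Finset.subset_union_left
    · exact (ih hB).trans Finset.subset_union_right

lemma disjoint_unionL {B₀ : Finset (Fin k)} {Bs : List (Finset (Fin k))}
    (hd : ∀ B ∈ Bs, Disjoint B₀ B) : Disjoint B₀ (Bs.foldr (· ∪ ·) ∅) := by
  induction Bs with
  | nil => simp
  | cons B tl ih =>
    simp only [List.foldr_cons, Finset.disjoint_union_right]
    exact ⟨hd B (List.mem_cons_self), ih (fun B' hB' => hd B' (List.mem_cons_of_mem _ hB'))⟩

lemma blocks_exist (h : Fin k → ℝ) {s : ℕ} (hs : 1 ≤ s) :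
    ∀ (N : ℕ) (R : Finset (Fin k)), R.card ≤ N →
    ∃ Bs : List (Finset (Fin k)),
      Bs.foldr (· ∪ ·) ∅ = R ∧ List.Pairwise Disjoint Bs ∧
      (∀ B ∈ Bs, B.card ≤ s) ∧ List.Chain' (blockRel h s) Bs ∧
      (∀ i ∈ Bs.headD ∅, ∀ j ∈ R \ Bs.headD ∅, |h j| ≤ |h i|) := by
  intro N
  induction N with
  | zero =>
    intro R hR
    have : R = ∅ := Finset.card_eq_zero.mp (Nat.le_zero.mp hR)
    subst this
    exact ⟨[], by simp, by simp, by simp, List.IsChain.nil, by simp⟩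
  | succ N ih =>
    intro R hR
    rcases R.eq_empty_or_nonempty with hRe | hRne
    · subst hRe
      exact ⟨[], by simp, by simp, by simp, List.IsChain.nil, by simp⟩
    · obtain ⟨B₀, hB₀sub, hB₀card, hB₀dom⟩ := topk_exists h s R
      have hRpos : 1 ≤ R.card := Finset.card_pos.mpr hRne
      have hB₀pos : 1 ≤ B₀.card := by rw [hB₀card]; omega
      have hR'card : (R \ B₀).card ≤ N := by
        rw [Finset.card_sdiff_of_subset hB₀sub]; omega
      obtain ⟨Bs', hU', hP', hC', hCh', _⟩ := ih (R \ B₀) hR'card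
      refine ⟨B₀ :: Bs', ?_, ?_, ?_, ?_, ?_⟩
      · simp only [List.foldr_cons, hU']
        exact Finset.union_sdiff_of_subset hB₀sub
      · refine List.pairwise_cons.mpr ⟨?_, hP'⟩
        intro B hB
        have : B ⊆ R \ B₀ := hU' ▸ subset_unionL hB
        refine Finset.disjoint_right.mpr ?_
        intro a haB haB₀
        exact (Finset.mem_sdiff.mp (this haB)).2 haB₀
      · intro B hB
        rcases List.mem_cons.mp hB with rfl | hB
        · rw [hB₀card]; exact min_le_left _ _
        · exact hC' B hB
      · rw [List.Chain', List.isChain_cons]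
        refine ⟨?_, hCh'⟩
        intro B₁ hB₁
        have hB₁mem : B₁ ∈ Bs' := by
          cases Bs' with
          | nil => simp at hB₁
          | cons a l => simp at hB₁; subst hB₁; exact List.mem_cons_self
        have hB₁sub : B₁ ⊆ R \ B₀ := hU' ▸ subset_unionL hB₁mem
        constructor
        · intro hB₁ne
          obtain ⟨j, hj⟩ := hB₁ne
          have hjR' : j ∈ R \ B₀ := hB₁sub hj
          have hne : B₀ ≠ R := by
            rintro rfl
            exact (Finset.mem_sdiff.mp hjR').2 (Finset.mem_sdiff.mp hjR').1
          have : B₀.card < R.card :=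
            lt_of_le_of_ne (Finset.card_le_card hB₀sub)
              (fun hc => hne (Finset.eq_of_subset_of_card_le hB₀sub (le_of_eq hc.symm)))
          rw [hB₀card] at this ⊢
          omega
        · intro i hi j hj
          exact hB₀dom i hi j (hB₁sub hj)
      · intro i hi j hj
        simp only [List.headD_cons] at hi hj
        exact hB₀dom i hi j hj

lemma pair_bound {h : Fin k → ℝ} {s : ℕ} (hs : 1 ≤ s) {B B' : Finset (Fin k)}
    (hcardB' : B'.card ≤ s) (hrel : blockRel h s B B') :
    norm2 (restr B' h) ≤ (∑ i ∈ B, |h i|) / Real.sqrt s := by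
  have hL1 : (0:ℝ) ≤ ∑ i ∈ B, |h i| := Finset.sum_nonneg (fun i _ => abs_nonneg _)
  have hs0 : (0:ℝ) < s := by exact_mod_cast hs
  have hsq : (0:ℝ) < Real.sqrt s := Real.sqrt_pos.mpr hs0
  rcases B'.eq_empty_or_nonempty with rfl | hne
  · have : restr (∅ : Finset (Fin k)) h = fun _ => 0 := by
      funext i; simp [restr]
    rw [this]
    have : norm2 (fun _ : Fin k => (0:ℝ)) = 0 := by simp [norm2]
    rw [this]
    positivity
  · have hBcard := hrel.1 hne
    have hb : ∀ j ∈ B', |h j| ≤ (∑ i ∈ B, |h i|) / s := by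
      intro j hj
      rw [le_div_iff₀ hs0]
      calc |h j| * s = ∑ _i ∈ B, |h j| := by
            rw [Finset.sum_const, nsmul_eq_mul, hBcard]; ring
      _ ≤ ∑ i ∈ B, |h i| := Finset.sum_le_sum (fun i hi => hrel.2 i hi j hj)
    have h1 := norm2_restr_le_of_forall_le (div_nonneg hL1 (le_of_lt hs0)) hb
    refine h1.trans ?_
    calc Real.sqrt B'.card * ((∑ i ∈ B, |h i|) / s)
        ≤ Real.sqrt s * ((∑ i ∈ B, |h i|) / s) := by
          apply mul_le_mul_of_nonneg_right
          · exact Real.sqrt_le_sqrt (by exact_mod_cast hcardB')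
          · positivity
    _ = (∑ i ∈ B, |h i|) / Real.sqrt s := by
          rw [eq_div_iff (ne_of_gt hsq)]
          have hss : Real.sqrt s * Real.sqrt s = (s:ℝ) := Real.mul_self_sqrt (le_of_lt hs0)
          field_simp
          nlinarith [hss]

lemma chain_sum_bound (h : Fin k → ℝ) {s : ℕ} (hs : 1 ≤ s) :
    ∀ (tl : List (Finset (Fin k))) (B₀ : Finset (Fin k)),
    (∀ B ∈ B₀ :: tl, B.card ≤ s) → List.Chain' (blockRel h s) (B₀ :: tl) →
    (tl.map fun B => norm2 (restr B h)).sum ≤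
      ((B₀ :: tl).map fun B => ∑ i ∈ B, |h i|).sum / Real.sqrt s := by
  intro tl
  induction tl with
  | nil =>
    intro B₀ _ _
    simp only [List.map_nil, List.sum_nil, List.map_cons, List.sum_cons]
    have : (0:ℝ) ≤ ∑ i ∈ B₀, |h i| := Finset.sum_nonneg (fun i _ => abs_nonneg _)
    positivity
  | cons B₁ tl' ih =>
    intro B₀ hcards hch
    rw [List.Chain', List.isChain_cons_cons] at hch
    have h1 : norm2 (restr B₁ h) ≤ (∑ i ∈ B₀, |h i|) / Real.sqrt s :=
      pair_bound hs (hcards B₁ (by simp)) hch.1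
    have h2 := ih B₁ (fun B hB => hcards B (by
      rcases List.mem_cons.mp hB with rfl | hB
      · simp
      · simp [hB])) hch.2
    simp only [List.map_cons, List.sum_cons] at h2 ⊢
    rw [add_div, add_div]
    calc norm2 (restr B₁ h) + (tl'.map fun B => norm2 (restr B h)).sum
        ≤ (∑ i ∈ B₀, |h i|) / Real.sqrt s +
          ((∑ i ∈ B₁, |h i|) / Real.sqrt s + ((tl'.map fun B => ∑ i ∈ B, |h i|).sum) / Real.sqrt s) := by
          rw [← add_div]
          exact add_le_add h1 h2
    _ = _ := by ring

lemma sum_l1_unionL (h : Fin k → ℝ) :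
    ∀ (Bs : List (Finset (Fin k))), List.Pairwise Disjoint Bs →
    ∑ i ∈ Bs.foldr (· ∪ ·) ∅, |h i| = (Bs.map fun B => ∑ i ∈ B, |h i|).sum := by
  intro Bs
  induction Bs with
  | nil => simp
  | cons B₀ tl ih =>
    intro hP
    rw [List.pairwise_cons] at hP
    simp only [List.foldr_cons, List.map_cons, List.sum_cons]
    rw [Finset.sum_union (disjoint_unionL hP.1), ih hP.2]

lemma norm2_unionL_le (h : Fin k → ℝ) :
    ∀ (Bs : List (Finset (Fin k))), List.Pairwise Disjoint Bs →
    norm2 (restr (Bs.foldr (· ∪ ·) ∅) h) ≤ (Bs.map fun B => norm2 (restr B h)).sum := by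
  intro Bs
  induction Bs with
  | nil =>
    intro _
    simp only [List.foldr_nil, List.map_nil, List.sum_nil]
    have : restr (∅ : Finset (Fin k)) h = fun _ => 0 := by funext i; simp [restr]
    rw [this]
    simp [norm2]
  | cons B₀ tl ih =>
    intro hP
    rw [List.pairwise_cons] at hP
    simp only [List.foldr_cons, List.map_cons, List.sum_cons]
    rw [restr_union_of_disjoint (disjoint_unionL hP.1) h]
    exact (norm2_add_le _ _).trans (add_le_add_right (ih hP.2) _)

end Chunk4

section Chunk5
variable {n m : ℕ} (A : Matrix (Fin n) (Fin m) ℝ)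

lemma sum_mulVec_mul (v : Fin m → ℝ) (Y : Fin n → ℝ) :
    ∑ j, A.mulVec v j * Y j = ∑ i, v i * ∑ j, A j i * Y j := by
  simp only [Matrix.mulVec, dotProduct, Finset.sum_mul]
  rw [Finset.sum_comm]
  apply Finset.sum_congr rfl
  intro i _
  rw [Finset.mul_sum]
  apply Finset.sum_congr rfl
  intro j _
  ring

lemma mulVec_fun_add (f g : Fin m → ℝ) :
    A.mulVec (fun i => f i + g i) = fun j => A.mulVec f j + A.mulVec g j := by
  have : (fun i => f i + g i) = f + g := rfl
  rw [this, Matrix.mulVec_add]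
  rfl

lemma inner_unionL_le (u h : Fin m → ℝ) :
    ∀ (Bs : List (Finset (Fin m))), List.Pairwise Disjoint Bs →
    |∑ j, A.mulVec u j * A.mulVec (restr (Bs.foldr (· ∪ ·) ∅) h) j| ≤
      (Bs.map fun B => |∑ j, A.mulVec u j * A.mulVec (restr B h) j|).sum := by
  intro Bs
  induction Bs with
  | nil =>
    intro _
    simp only [List.foldr_nil, List.map_nil, List.sum_nil]
    have h0 : restr (∅ : Finset (Fin m)) h = fun _ => 0 := by funext i; simp [restr]
    rw [h0]
    have : A.mulVec (fun _ => 0) = 0 := by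
      have : (fun _ : Fin m => (0:ℝ)) = (0 : Fin m → ℝ) := rfl
      rw [this, Matrix.mulVec_zero]
    rw [this]
    simp
  | cons B₀ tl ih =>
    intro hP
    rw [List.pairwise_cons] at hP
    simp only [List.foldr_cons, List.map_cons, List.sum_cons]
    rw [restr_union_of_disjoint (disjoint_unionL hP.1) h, mulVec_fun_add]
    have : ∑ j, A.mulVec u j * (A.mulVec (restr B₀ h) j + A.mulVec (restr (tl.foldr (· ∪ ·) ∅) h) j)
        = (∑ j, A.mulVec u j * A.mulVec (restr B₀ h) j)
          + ∑ j, A.mulVec u j * A.mulVec (restr (tl.foldr (· ∪ ·) ∅) h) j := by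
      rw [← Finset.sum_add_distrib]
      exact Finset.sum_congr rfl (fun j _ => by ring)
    rw [this]
    exact (abs_add_le _ _).trans (add_le_add_right (ih hP.2) _)

end Chunk5


section Chunk6
variable {n m : ℕ} (A : Matrix (Fin n) (Fin m) ℝ)

set_option maxHeartbeats 1000000 in
lemma ls_step_bound {T : Finset (Fin m)} {δ' θ ε : ℝ} {ST SΔ : ℕ}
    (hRIP' : RIPBound A ST δ') (hδ' : δ' < 1/2)
    (hθ : ROBound A ST SΔ θ)
    (hTcard : T.card ≤ ST)
    (g xΔ : Fin m → ℝ) (w : Fin n → ℝ)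
    (hg : ∀ i, i ∉ T → g i = 0)
    (hxΔd : Disjoint T (spt xΔ)) (hxΔc : (spt xΔ).card ≤ SΔ)
    (hw : norm2 w ≤ ε)
    (hnormal : ∀ i ∈ T, ∑ j, A j i * (A.mulVec g j + A.mulVec xΔ j + w j) = 0) :
    norm2 g ≤ 2 * θ * norm2 xΔ + Real.sqrt 2 * ε := by
  classical
  obtain ⟨hδ'0, hδ'1, hrip⟩ := hRIP'
  have hd2 : (0:ℝ) < 1 - δ' := by linarith
  have hε0 : 0 ≤ ε := le_trans (norm2_nonneg w) hw
  -- extension of a T-indexed vector by zero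
  set ext : ({i // i ∈ T} → ℝ) → (Fin m → ℝ) :=
    fun u i => if hi : i ∈ T then u ⟨i, hi⟩ else 0 with hext
  have hext_spt : ∀ u, spt (ext u) ⊆ T := by
    intro u i hi
    rw [mem_spt] at hi
    by_contra hiT
    simp [hext, hiT] at hi
  have hext_card : ∀ u, (spt (ext u)).card ≤ ST :=
    fun u => le_trans (Finset.card_le_card (hext_spt u)) hTcard
  have hext_add : ∀ u v, ext (u + v) = fun i => ext u i + ext v i := by
    intro u v; funext i
    by_cases hi : i ∈ T <;> simp [hext, hi]
  have hext_smul : ∀ (c : ℝ) u, ext (c • u) = fun i => c * ext u i := by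
    intro c u; funext i
    by_cases hi : i ∈ T <;> simp [hext, hi]
  -- the Gram linear map
  set φ : ({i // i ∈ T} → ℝ) →ₗ[ℝ] ({i // i ∈ T} → ℝ) :=
    { toFun := fun u i => ∑ j, A j i.1 * A.mulVec (ext u) j
      map_add' := by
        intro u v
        funext i
        simp only [Pi.add_apply]
        have hj : ∀ j, A.mulVec (ext (u + v)) j = A.mulVec (ext u) j + A.mulVec (ext v) j := by
          intro j
          rw [hext_add]
          exact congrFun (mulVec_fun_add A (ext u) (ext v)) j
        calc ∑ j, A j i.1 * A.mulVec (ext (u + v)) j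
            = ∑ j, (A j i.1 * A.mulVec (ext u) j + A j i.1 * A.mulVec (ext v) j) :=
              Finset.sum_congr rfl (fun j _ => by rw [hj j]; ring)
        _ = _ := Finset.sum_add_distrib
      map_smul' := by
        intro c u
        funext i
        simp only [RingHom.id_apply, Pi.smul_apply, smul_eq_mul]
        have hj : ∀ j, A.mulVec (ext (c • u)) j = c * A.mulVec (ext u) j := by
          intro j
          rw [hext_smul]
          have h1 : (fun i => c * ext u i) = c • (ext u) := rfl
          rw [h1, Matrix.mulVec_smul]
          rfl
        calc ∑ j, A j i.1 * A.mulVec (ext (c • u)) j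
            = ∑ j, c * (A j i.1 * A.mulVec (ext u) j) :=
              Finset.sum_congr rfl (fun j _ => by rw [hj j]; ring)
        _ = _ := by rw [← Finset.mul_sum] } with hφ
  -- key identity : ∑_j (A (ext u))_j * Y j = ∑_{i : T} u i * ∑_j A j i Y j
  have hkey : ∀ (u : {i // i ∈ T} → ℝ) (Y : Fin n → ℝ),
      ∑ j, A.mulVec (ext u) j * Y j = ∑ i : {i // i ∈ T}, u i * ∑ j, A j i.1 * Y j := by
    intro u Y
    rw [sum_mulVec_mul]
    rw [← Finset.sum_subset (Finset.subset_univ T)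
      (fun i _ hiT => by simp [hext, hiT])]
    rw [← Finset.sum_attach T (fun i => ext u i * ∑ j, A j i * Y j)]
    rw [Finset.univ_eq_attach]
    apply Finset.sum_congr rfl
    intro i _
    simp [hext, i.2]
  -- injectivity of φ
  have hinj : Function.Injective φ := by
    rw [injective_iff_map_eq_zero]
    intro u hu
    have h1 : ∑ j, A.mulVec (ext u) j ^ 2 = 0 := by
      have := hkey u (A.mulVec (ext u))
      simp only [hφ] at hu
      have hz : ∀ i : {i // i ∈ T}, (∑ j, A j i.1 * A.mulVec (ext u) j) = 0 := by
        intro i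
        exact congrFun hu i
      rw [show ∑ j, A.mulVec (ext u) j ^ 2 = ∑ j, A.mulVec (ext u) j * A.mulVec (ext u) j from
        Finset.sum_congr rfl (fun j _ => sq (A.mulVec (ext u) j) ▸ by ring), this]
      simp [hz]
    have h2 := (hrip (ext u) (hext_card u)).1
    rw [h1] at h2
    have h3 : ∑ i, ext u i ^ 2 ≤ 0 := by nlinarith
    have h4 : ∑ i, ext u i ^ 2 = 0 :=
      le_antisymm h3 (Finset.sum_nonneg (fun i _ => sq_nonneg _))
    have h5 : ∀ i, ext u i = 0 := by
      intro i
      have := (Finset.sum_eq_zero_iff_of_nonneg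
        (fun i (_ : i ∈ Finset.univ) => sq_nonneg (ext u i))).mp h4 i (Finset.mem_univ i)
      exact pow_eq_zero_iff (by norm_num) |>.mp this
    funext i
    have := h5 i.1
    simp only [hext, i.2, dif_pos] at this
    simpa using this
  have hsurj : Function.Surjective φ := by
    rw [← LinearMap.injective_iff_surjective]
    exact hinj
  -- the two pieces
  obtain ⟨u₁, hu₁⟩ := hsurj (fun i => -∑ j, A j i.1 * A.mulVec xΔ j)
  obtain ⟨u₂, hu₂⟩ := hsurj (fun i => -∑ j, A j i.1 * w j)
  -- g = ext u₁ + ext u₂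
  set ug : {i // i ∈ T} → ℝ := fun i => g i.1 with hug
  have hextug : ext ug = g := by
    funext i
    by_cases hi : i ∈ T
    · simp [hext, hi, hug]
    · simp [hext, hi, hg i hi]
  have hφug : φ ug = (fun i => -∑ j, A j i.1 * A.mulVec xΔ j)
      + (fun i => -∑ j, A j i.1 * w j) := by
    funext i
    have hn := hnormal i.1 i.2
    simp only [hφ, LinearMap.coe_mk, AddHom.coe_mk, Pi.add_apply, hextug]
    have expand : ∑ j, A j i.1 * (A.mulVec g j + A.mulVec xΔ j + w j)
        = (∑ j, A j i.1 * A.mulVec g j) + (∑ j, A j i.1 * A.mulVec xΔ j)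
          + (∑ j, A j i.1 * w j) := by
      rw [← Finset.sum_add_distrib, ← Finset.sum_add_distrib]
      exact Finset.sum_congr rfl (fun j _ => by ring)
    rw [expand] at hn
    linarith
  have hdecomp : ug = u₁ + u₂ := by
    apply hinj
    rw [hφug, map_add, hu₁, hu₂]
  have hgsplit : g = fun i => ext u₁ i + ext u₂ i := by
    rw [← hextug, hdecomp, hext_add]
  -- bound on h₁ := ext u₁
  have e4 : ∀ i : {i // i ∈ T}, (∑ j, A j i.1 * A.mulVec (ext u₁) j)
      = -∑ j, A j i.1 * A.mulVec xΔ j := fun i => congrFun hu₁ i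
  have hAh₁ : ∑ j, A.mulVec (ext u₁) j ^ 2
      = -(∑ j, A.mulVec (ext u₁) j * A.mulVec xΔ j) := by
    calc ∑ j, A.mulVec (ext u₁) j ^ 2
        = ∑ j, A.mulVec (ext u₁) j * A.mulVec (ext u₁) j :=
          Finset.sum_congr rfl (fun j _ => by ring)
    _ = ∑ i : {i // i ∈ T}, u₁ i * ∑ j, A j i.1 * A.mulVec (ext u₁) j :=
          hkey u₁ (A.mulVec (ext u₁))
    _ = ∑ i : {i // i ∈ T}, -(u₁ i * ∑ j, A j i.1 * A.mulVec xΔ j) :=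
          Finset.sum_congr rfl (fun i _ => by rw [e4 i]; ring)
    _ = -(∑ i : {i // i ∈ T}, u₁ i * ∑ j, A j i.1 * A.mulVec xΔ j) := by
          rw [Finset.sum_neg_distrib]
    _ = -(∑ j, A.mulVec (ext u₁) j * A.mulVec xΔ j) := by
          rw [← hkey u₁ (A.mulVec xΔ)]
  have hn1 : norm2 (ext u₁) ≤ 2 * θ * norm2 xΔ := by
    have hro := hθ.2 (ext u₁) xΔ
      (Finset.disjoint_of_subset_left (hext_spt u₁) hxΔd) (hext_card u₁) hxΔc
    have hlow := (hrip (ext u₁) (hext_card u₁)).1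
    have habs : ∑ j, A.mulVec (ext u₁) j ^ 2 ≤ θ * norm2 (ext u₁) * norm2 xΔ := by
      rw [hAh₁]
      calc -(∑ j, A.mulVec (ext u₁) j * A.mulVec xΔ j)
          ≤ |∑ j, A.mulVec (ext u₁) j * A.mulVec xΔ j| := neg_le_abs _
      _ ≤ θ * norm2 (ext u₁) * norm2 xΔ := hro
    have hsq : (1 - δ') * norm2 (ext u₁) ^ 2 ≤ θ * norm2 (ext u₁) * norm2 xΔ := by
      rw [sq_norm2]
      exact le_trans hlow habs
    by_cases hz : norm2 (ext u₁) = 0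
    · rw [hz]
      have : 0 ≤ θ := hθ.1
      have : 0 ≤ norm2 xΔ := norm2_nonneg _
      positivity
    · have hpos : 0 < norm2 (ext u₁) := lt_of_le_of_ne (norm2_nonneg _) (Ne.symm hz)
      have h1 : (1 - δ') * norm2 (ext u₁) ≤ θ * norm2 xΔ := by
        have := mul_le_mul_of_nonneg_right hsq (le_of_lt (inv_pos.mpr hpos))
        nlinarith
      nlinarith
  -- bound on h₂ := ext u₂
  have e5 : ∀ i : {i // i ∈ T}, (∑ j, A j i.1 * A.mulVec (ext u₂) j)
      = -∑ j, A j i.1 * w j := fun i => congrFun hu₂ i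
  have hAh₂ : ∑ j, A.mulVec (ext u₂) j ^ 2 = -(∑ j, A.mulVec (ext u₂) j * w j) := by
    calc ∑ j, A.mulVec (ext u₂) j ^ 2
        = ∑ j, A.mulVec (ext u₂) j * A.mulVec (ext u₂) j :=
          Finset.sum_congr rfl (fun j _ => by ring)
    _ = ∑ i : {i // i ∈ T}, u₂ i * ∑ j, A j i.1 * A.mulVec (ext u₂) j :=
          hkey u₂ (A.mulVec (ext u₂))
    _ = ∑ i : {i // i ∈ T}, -(u₂ i * ∑ j, A j i.1 * w j) :=
          Finset.sum_congr rfl (fun i _ => by rw [e5 i]; ring)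
    _ = -(∑ i : {i // i ∈ T}, u₂ i * ∑ j, A j i.1 * w j) := by
          rw [Finset.sum_neg_distrib]
    _ = -(∑ j, A.mulVec (ext u₂) j * w j) := by rw [← hkey u₂ w]
  have hn2 : norm2 (ext u₂) ≤ Real.sqrt 2 * ε := by
    have hcs : |∑ j, A.mulVec (ext u₂) j * w j| ≤ norm2 (A.mulVec (ext u₂)) * norm2 w :=
      abs_sum_mul_le _ _
    have hAn : norm2 (A.mulVec (ext u₂)) ^ 2 ≤ norm2 (A.mulVec (ext u₂)) * ε := by
      rw [sq_norm2, hAh₂]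
      calc -(∑ j, A.mulVec (ext u₂) j * w j) ≤ |∑ j, A.mulVec (ext u₂) j * w j| := neg_le_abs _
      _ ≤ norm2 (A.mulVec (ext u₂)) * norm2 w := hcs
      _ ≤ norm2 (A.mulVec (ext u₂)) * ε :=
          mul_le_mul_of_nonneg_left hw (norm2_nonneg _)
    have hAle : norm2 (A.mulVec (ext u₂)) ≤ ε := by
      by_cases hz : norm2 (A.mulVec (ext u₂)) = 0
      · rw [hz]; exact hε0
      · have hpos : 0 < norm2 (A.mulVec (ext u₂)) :=
          lt_of_le_of_ne (norm2_nonneg _) (Ne.symm hz)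
        nlinarith
    have hlow := (hrip (ext u₂) (hext_card u₂)).1
    have h6 : (1 - δ') * norm2 (ext u₂) ^ 2 ≤ ε ^ 2 := by
      rw [sq_norm2]
      calc (1 - δ') * ∑ i, ext u₂ i ^ 2 ≤ ∑ j, A.mulVec (ext u₂) j ^ 2 := hlow
      _ = norm2 (A.mulVec (ext u₂)) ^ 2 := (sq_norm2 _).symm
      _ ≤ ε ^ 2 := by nlinarith [norm2_nonneg (A.mulVec (ext u₂))]
    -- (1-δ') > 1/2 so norm2 (ext u₂)^2 ≤ 2 ε^2
    have h7 : norm2 (ext u₂) ^ 2 ≤ 2 * ε ^ 2 := by nlinarith [norm2_nonneg (ext u₂)]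
    have h8 : (Real.sqrt 2 * ε) ^ 2 = 2 * ε ^ 2 := by
      rw [mul_pow, Real.sq_sqrt (by norm_num : (2:ℝ) ≥ 0)]
    nlinarith [norm2_nonneg (ext u₂), Real.sqrt_nonneg 2,
      mul_nonneg (Real.sqrt_nonneg 2) hε0]
  calc norm2 g = norm2 (fun i => ext u₁ i + ext u₂ i) := by rw [← hgsplit]
  _ ≤ norm2 (ext u₁) + norm2 (ext u₂) := norm2_add_le _ _
  _ ≤ 2 * θ * norm2 xΔ + Real.sqrt 2 * ε := add_le_add hn1 hn2

end Chunk6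



section Chunk7
variable {n m : ℕ} (A : Matrix (Fin n) (Fin m) ℝ)

lemma list_sum_map_mul_left {α : Type*} (l : List α) (f : α → ℝ) (c : ℝ) :
    (l.map fun a => c * f a).sum = c * (l.map f).sum := by
  induction l with
  | nil => simp
  | cons a l ih => simp [ih, mul_add]

lemma list_sum_le_sum {α : Type*} {l : List α} {f g : α → ℝ}
    (h : ∀ a ∈ l, f a ≤ g a) : (l.map f).sum ≤ (l.map g).sum := by
  induction l with
  | nil => simp
  | cons a l ih =>
    simp only [List.map_cons, List.sum_cons]
    exact add_le_add (h a (List.mem_cons_self))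
      (ih (fun a ha => h a (List.mem_cons_of_mem _ ha)))

lemma le_of_sq_le_sq'' {a b : ℝ} (hb : 0 ≤ b) (h : a ^ 2 ≤ b ^ 2) : a ≤ b := by
  nlinarith [sq_nonneg (a - b), sq_nonneg (a + b)]

lemma sqrt2_facts : 1 < Real.sqrt 2 ∧ Real.sqrt 2 ^ 2 = 2 := by
  constructor
  · have : (1:ℝ) = Real.sqrt 1 := (Real.sqrt_one).symm
    rw [this]
    exact Real.sqrt_lt_sqrt (by norm_num) (by norm_num)
  · exact Real.sq_sqrt (by norm_num)

set_option maxHeartbeats 2000000 in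
lemma cs_bound {δ ε : ℝ} {SΔ : ℕ}
    (hRIP : RIPBound A (2 * SΔ) δ) (hδ : δ < (Real.sqrt 2 - 1) / 2)
    (β βh : Fin m → ℝ) (T₀ : Finset (Fin m)) (hT₀ : T₀.Nonempty) (hcardT₀ : T₀.card ≤ SΔ)
    (hAh : norm2 (A.mulVec (fun i => βh i - β i)) ≤ 2 * ε)
    (hl1 : ∑ i, |βh i| ≤ ∑ i, |β i|) (hε : 0 ≤ ε) :
    norm2 (fun i => βh i - β i) ≤
      C1 δ * ε + C2 δ * (∑ i ∈ T₀ᶜ, |β i|) / Real.sqrt T₀.card := by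
  classical
  obtain ⟨hδ0, hδ1, hrip⟩ := hRIP
  obtain ⟨hs2gt, hs2sq⟩ := sqrt2_facts
  have hs2pos : (0:ℝ) < Real.sqrt 2 := by linarith
  set h : Fin m → ℝ := fun i => βh i - β i with hdefh
  set s : ℕ := T₀.card with hdefs
  have hs : 1 ≤ s := Finset.card_pos.mpr hT₀
  have hs0 : (0:ℝ) < s := by exact_mod_cast hs
  have hsqs : (0:ℝ) < Real.sqrt s := Real.sqrt_pos.mpr hs0
  set d : ℝ := 1 - (Real.sqrt 2 + 1) * δ with hdefd
  have hd : 1/2 < d := by nlinarith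
  have hd0 : 0 < d := by linarith
  set e₀ : ℝ := ∑ i ∈ T₀ᶜ, |β i| with hdefe
  have he₀ : 0 ≤ e₀ := Finset.sum_nonneg (fun i _ => abs_nonneg _)
  -- cone constraint
  have hcone : ∑ i ∈ T₀ᶜ, |h i| ≤ ∑ i ∈ T₀, |h i| + 2 * e₀ := by
    have hA : ∑ i ∈ T₀, |β i| - ∑ i ∈ T₀, |h i| ≤ ∑ i ∈ T₀, |βh i| := by
      rw [← Finset.sum_sub_distrib]
      apply Finset.sum_le_sum
      intro i _
      have : |β i| ≤ |βh i| + |h i| := by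
        calc |β i| = |βh i - h i| := by simp [hdefh]
        _ ≤ |βh i| + |h i| := abs_sub _ _
      linarith
    have hB : ∑ i ∈ T₀ᶜ, |h i| - ∑ i ∈ T₀ᶜ, |β i| ≤ ∑ i ∈ T₀ᶜ, |βh i| := by
      rw [← Finset.sum_sub_distrib]
      apply Finset.sum_le_sum
      intro i _
      have : |h i| ≤ |βh i| + |β i| := abs_sub _ _
      linarith
    have h1 : ∑ i ∈ T₀, |βh i| + ∑ i ∈ T₀ᶜ, |βh i| = ∑ i, |βh i| :=
      Finset.sum_add_sum_compl T₀ _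
    have h2 : ∑ i ∈ T₀, |β i| + ∑ i ∈ T₀ᶜ, |β i| = ∑ i, |β i| :=
      Finset.sum_add_sum_compl T₀ _
    have := hl1
    linarith
  -- blocks
  obtain ⟨Bs, hU, hP, hC, hCh, hhead⟩ := blocks_exist h hs (T₀ᶜ).card T₀ᶜ le_rfl
  cases Bs with
  | nil =>
    -- T₀ᶜ = ∅, h is supported on T₀
    have hRempty : (T₀ᶜ : Finset (Fin m)) = ∅ := by simpa using hU.symm
    have hspth : spt h ⊆ T₀ := by
      intro i hi
      by_contra hiT
      have : i ∈ (T₀ᶜ : Finset (Fin m)) := Finset.mem_compl.mpr hiT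
      rw [hRempty] at this
      simp at this
    have hcard : (spt h).card ≤ 2 * SΔ :=
      le_trans (Finset.card_le_card hspth) (by omega)
    have hlow := (hrip h hcard).1
    have hn2 : (1 - δ) * norm2 h ^ 2 ≤ (2 * ε) ^ 2 := by
      rw [sq_norm2]
      calc (1 - δ) * ∑ i, h i ^ 2 ≤ ∑ j, A.mulVec h j ^ 2 := hlow
      _ = norm2 (A.mulVec h) ^ 2 := (sq_norm2 _).symm
      _ ≤ (2 * ε) ^ 2 := by nlinarith [norm2_nonneg (A.mulVec h)]
    have hδhalf : δ < 1/2 := by nlinarith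
    have hC1 : 4 ≤ C1 δ := by
      rw [C1]
      rw [le_div_iff₀ hd0]
      have h1 : 1 ≤ Real.sqrt (1 + δ) := by
        nlinarith [Real.sq_sqrt (show (0:ℝ) ≤ 1 + δ by linarith), Real.sqrt_nonneg (1 + δ)]
      have hd1 : d ≤ 1 := by nlinarith
      nlinarith
    have hC2 : 0 ≤ C2 δ := by
      rw [C2]
      apply div_nonneg _ (le_of_lt hd0)
      nlinarith
    have hnh : norm2 h ≤ 4 * ε := by nlinarith [norm2_nonneg h]
    calc norm2 h ≤ 4 * ε := hnh
    _ ≤ C1 δ * ε := by nlinarith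
    _ ≤ C1 δ * ε + C2 δ * e₀ / Real.sqrt s := by
        have := div_nonneg (mul_nonneg hC2 he₀) (le_of_lt hsqs)
        linarith
  | cons T₁ tl =>
    have hP' := List.pairwise_cons.mp hP
    set U2 : Finset (Fin m) := tl.foldr (· ∪ ·) ∅ with hdefU2
    have hU' : T₁ ∪ U2 = T₀ᶜ := by simpa using hU
    have hT₁sub : T₁ ⊆ T₀ᶜ := hU' ▸ Finset.subset_union_left
    have hU2sub : U2 ⊆ T₀ᶜ := hU' ▸ Finset.subset_union_right
    have hdT₀T₁ : Disjoint T₀ T₁ := by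
      refine Finset.disjoint_right.mpr ?_
      intro a ha haT₀
      exact (Finset.mem_compl.mp (hT₁sub ha)) haT₀
    have hdT₀U2 : Disjoint T₀ U2 := by
      refine Finset.disjoint_right.mpr ?_
      intro a ha haT₀
      exact (Finset.mem_compl.mp (hU2sub ha)) haT₀
    have hdT₁U2 : Disjoint T₁ U2 := disjoint_unionL hP'.1
    have hd01U2 : Disjoint (T₀ ∪ T₁) U2 := Finset.disjoint_union_left.mpr ⟨hdT₀U2, hdT₁U2⟩
    have hcover : (T₀ ∪ T₁) ∪ U2 = Finset.univ := by
      rw [Finset.union_assoc, hU', Finset.union_compl]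
    set h01 : Fin m → ℝ := restr (T₀ ∪ T₁) h with hdefh01
    set hrest : Fin m → ℝ := restr U2 h with hdefhrest
    have hsplith : ∀ i, h i = h01 i + hrest i := by
      intro i
      have h1 : restr ((T₀ ∪ T₁) ∪ U2) h = fun i => h01 i + hrest i :=
        restr_union_of_disjoint hd01U2 h
      rw [hcover] at h1
      have h2 : restr Finset.univ h i = h i := restr_apply_mem (Finset.mem_univ i)
      rw [← h2]
      exact congrFun h1 i
    have hcT₁ : T₁.card ≤ s := hC T₁ (List.mem_cons_self)
    have hc01 : (T₀ ∪ T₁).card ≤ 2 * SΔ := by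
      have := Finset.card_union_le T₀ T₁
      omega
    have hc01' : (spt h01).card ≤ 2 * SΔ :=
      le_trans (Finset.card_le_card (spt_restr_subset _ _)) hc01
    -- ℓ2 pythagoras on T₀ ∪ T₁
    have hsq01 : norm2 (restr T₀ h) ^ 2 + norm2 (restr T₁ h) ^ 2 = norm2 h01 ^ 2 := by
      rw [hdefh01, sq_norm2, sq_norm2, sq_norm2, sq_sum_restr, sq_sum_restr, sq_sum_restr,
        ← Finset.sum_union hdT₀T₁]
    have hn₀nn : 0 ≤ norm2 (restr T₀ h) := norm2_nonneg _
    have hn₁nn : 0 ≤ norm2 (restr T₁ h) := norm2_nonneg _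
    have hXnn : 0 ≤ norm2 h01 := norm2_nonneg _
    have hn₀le : norm2 (restr T₀ h) ≤ norm2 h01 := by nlinarith
    have hsum01 : norm2 (restr T₀ h) + norm2 (restr T₁ h) ≤ Real.sqrt 2 * norm2 h01 := by
      apply le_of_sq_le_sq'' (mul_nonneg hs2pos.le hXnn)
      have e1 : (Real.sqrt 2 * norm2 h01) ^ 2 = 2 * norm2 h01 ^ 2 := by
        rw [mul_pow, hs2sq]
      rw [e1]
      nlinarith [sq_nonneg (norm2 (restr T₀ h) - norm2 (restr T₁ h))]
    -- block tail ℓ2 sum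
    set S : ℝ := (tl.map fun B => norm2 (restr B h)).sum with hdefS
    have hS0 : 0 ≤ S := by
      apply List.sum_nonneg
      intro x hx
      obtain ⟨B, _, rfl⟩ := List.mem_map.mp hx
      exact norm2_nonneg _
    have hS1 : S ≤ (∑ i ∈ T₀ᶜ, |h i|) / Real.sqrt s := by
      have t1 := chain_sum_bound h hs tl T₁ hC hCh
      have t2 := sum_l1_unionL h (T₁ :: tl) hP
      rw [hU] at t2
      rw [← t2] at t1
      exact t1
    have hrestle : norm2 hrest ≤ S := norm2_unionL_le h tl hP'.2
    -- cone in ℓ2 form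
    have hl1T₀ : ∑ i ∈ T₀, |h i| ≤ Real.sqrt s * norm2 (restr T₀ h) := by
      have := l1_le_sqrt_card_mul_norm2 T₀ h
      rw [← hdefs] at this
      exact this
    have hScone : S ≤ norm2 h01 + 2 * e₀ / Real.sqrt s := by
      have step1 : S ≤ (Real.sqrt s * norm2 (restr T₀ h) + 2 * e₀) / Real.sqrt s := by
        refine hS1.trans ?_
        refine div_le_div_of_nonneg_right ?_ (Real.sqrt_nonneg _)
        linarith [hcone]
      have step2 : (Real.sqrt s * norm2 (restr T₀ h) + 2 * e₀) / Real.sqrt s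
          = norm2 (restr T₀ h) + 2 * e₀ / Real.sqrt s := by
        field_simp
      rw [step2] at step1
      linarith
    -- inner product splits
    have hAsplit : ∀ j, A.mulVec h j = A.mulVec h01 j + A.mulVec hrest j := by
      intro j
      have hfe : h = fun i => h01 i + hrest i := funext hsplith
      rw [hfe]
      exact congrFun (mulVec_fun_add A h01 hrest) j
    have hinner_main : ∑ j, A.mulVec h01 j ^ 2 =
        (∑ j, A.mulVec h01 j * A.mulVec h j) - ∑ j, A.mulVec h01 j * A.mulVec hrest j := by
      rw [← Finset.sum_sub_distrib]
      apply Finset.sum_congr rfl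
      intro j _
      rw [hAsplit j]
      ring
    have h1δnn : (0:ℝ) ≤ 1 + δ := by linarith
    have hAh01up : norm2 (A.mulVec h01) ≤ Real.sqrt (1 + δ) * norm2 h01 := by
      have hup := (hrip h01 hc01').2
      have e1 : norm2 (A.mulVec h01) ^ 2 ≤ (1 + δ) * norm2 h01 ^ 2 := by
        rw [sq_norm2, sq_norm2]
        exact hup
      nlinarith [norm2_nonneg (A.mulVec h01), Real.sq_sqrt h1δnn, Real.sqrt_nonneg (1 + δ),
        mul_nonneg (Real.sqrt_nonneg (1 + δ)) hXnn]
    have hI1 : |∑ j, A.mulVec h01 j * A.mulVec h j| ≤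
        2 * ε * (Real.sqrt (1 + δ) * norm2 h01) := by
      calc |∑ j, A.mulVec h01 j * A.mulVec h j|
          ≤ norm2 (A.mulVec h01) * norm2 (A.mulVec h) := abs_sum_mul_le _ _
      _ ≤ (Real.sqrt (1 + δ) * norm2 h01) * (2 * ε) := by
          apply mul_le_mul hAh01up hAh (norm2_nonneg _)
          exact mul_nonneg (Real.sqrt_nonneg _) hXnn
      _ = 2 * ε * (Real.sqrt (1 + δ) * norm2 h01) := by ring
    -- per-block inner product bound
    have hI2 : |∑ j, A.mulVec h01 j * A.mulVec hrest j| ≤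
        Real.sqrt 2 * δ * norm2 h01 * S := by
      have t1 := inner_unionL_le A h01 h tl hP'.2
      have t2 : ∀ B ∈ tl, |∑ j, A.mulVec h01 j * A.mulVec (restr B h) j| ≤
          (Real.sqrt 2 * δ * norm2 h01) * norm2 (restr B h) := by
        intro B hB
        have hBsub : B ⊆ U2 := subset_unionL hB
        have hBcard : B.card ≤ s := hC B (List.mem_cons_of_mem _ hB)
        have hsplit01 : ∀ j, A.mulVec h01 j
            = A.mulVec (restr T₀ h) j + A.mulVec (restr T₁ h) j := by
          intro j
          have hfe : h01 = fun i => restr T₀ h i + restr T₁ h i := by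
            rw [hdefh01]
            exact restr_union_of_disjoint hdT₀T₁ h
          rw [hfe]
          exact congrFun (mulVec_fun_add A (restr T₀ h) (restr T₁ h)) j
        have hsplitsum : ∑ j, A.mulVec h01 j * A.mulVec (restr B h) j
            = (∑ j, A.mulVec (restr T₀ h) j * A.mulVec (restr B h) j)
              + ∑ j, A.mulVec (restr T₁ h) j * A.mulVec (restr B h) j := by
          rw [← Finset.sum_add_distrib]
          apply Finset.sum_congr rfl
          intro j _
          rw [hsplit01 j]
          ring
        have hd0B : Disjoint (spt (restr T₀ h)) (spt (restr B h)) := by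
          apply Finset.disjoint_of_subset_left (spt_restr_subset _ _)
          apply Finset.disjoint_of_subset_right (spt_restr_subset _ _)
          exact Finset.disjoint_of_subset_right hBsub hdT₀U2
        have hd1B : Disjoint (spt (restr T₁ h)) (spt (restr B h)) := by
          apply Finset.disjoint_of_subset_left (spt_restr_subset _ _)
          apply Finset.disjoint_of_subset_right (spt_restr_subset _ _)
          exact hP'.1 B hB
        have hc0B : (spt (restr T₀ h)).card + (spt (restr B h)).card ≤ 2 * SΔ := by
          have a1 : (spt (restr T₀ h)).card ≤ s :=
            Finset.card_le_card (spt_restr_subset _ _)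
          have a2 : (spt (restr B h)).card ≤ s :=
            le_trans (Finset.card_le_card (spt_restr_subset _ _)) hBcard
          omega
        have hc1B : (spt (restr T₁ h)).card + (spt (restr B h)).card ≤ 2 * SΔ := by
          have a1 : (spt (restr T₁ h)).card ≤ s :=
            le_trans (Finset.card_le_card (spt_restr_subset _ _)) hcT₁
          have a2 : (spt (restr B h)).card ≤ s :=
            le_trans (Finset.card_le_card (spt_restr_subset _ _)) hBcard
          omega
        have b0 := rip_inner_le ⟨hδ0, hδ1, hrip⟩ (restr T₀ h) (restr B h) hd0B hc0B
        have b1 := rip_inner_le ⟨hδ0, hδ1, hrip⟩ (restr T₁ h) (restr B h) hd1B hc1B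
        have hBnn : 0 ≤ norm2 (restr B h) := norm2_nonneg _
        calc |∑ j, A.mulVec h01 j * A.mulVec (restr B h) j|
            ≤ |∑ j, A.mulVec (restr T₀ h) j * A.mulVec (restr B h) j|
              + |∑ j, A.mulVec (restr T₁ h) j * A.mulVec (restr B h) j| := by
              rw [hsplitsum]
              exact abs_add_le _ _
        _ ≤ δ * norm2 (restr T₀ h) * norm2 (restr B h)
              + δ * norm2 (restr T₁ h) * norm2 (restr B h) := add_le_add b0 b1
        _ = δ * (norm2 (restr T₀ h) + norm2 (restr T₁ h)) * norm2 (restr B h) := by ring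
        _ ≤ δ * (Real.sqrt 2 * norm2 h01) * norm2 (restr B h) := by
              apply mul_le_mul_of_nonneg_right _ hBnn
              exact mul_le_mul_of_nonneg_left hsum01 hδ0
        _ = (Real.sqrt 2 * δ * norm2 h01) * norm2 (restr B h) := by ring
      calc |∑ j, A.mulVec h01 j * A.mulVec hrest j|
          ≤ (tl.map fun B => |∑ j, A.mulVec h01 j * A.mulVec (restr B h) j|).sum := t1
      _ ≤ (tl.map fun B => (Real.sqrt 2 * δ * norm2 h01) * norm2 (restr B h)).sum :=
            list_sum_le_sum t2
      _ = (Real.sqrt 2 * δ * norm2 h01) * S :=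
            list_sum_map_mul_left tl (fun B => norm2 (restr B h)) _
      _ = Real.sqrt 2 * δ * norm2 h01 * S := by ring
    -- main quadratic inequality
    have hmain : (1 - δ) * norm2 h01 ^ 2 ≤
        2 * ε * (Real.sqrt (1 + δ) * norm2 h01) + Real.sqrt 2 * δ * norm2 h01 * S := by
      have hlow := (hrip h01 hc01').1
      have e1 : (1 - δ) * norm2 h01 ^ 2 ≤ ∑ j, A.mulVec h01 j ^ 2 := by
        rw [sq_norm2]
        exact hlow
      calc (1 - δ) * norm2 h01 ^ 2 ≤ ∑ j, A.mulVec h01 j ^ 2 := e1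
      _ = (∑ j, A.mulVec h01 j * A.mulVec h j) - ∑ j, A.mulVec h01 j * A.mulVec hrest j :=
            hinner_main
      _ ≤ 2 * ε * (Real.sqrt (1 + δ) * norm2 h01) + Real.sqrt 2 * δ * norm2 h01 * S := by
            have a1 := le_abs_self (∑ j, A.mulVec h01 j * A.mulVec h j)
            have a2 := neg_abs_le (∑ j, A.mulVec h01 j * A.mulVec hrest j)
            linarith [hI1, hI2]
    -- conclude bound on X
    set X : ℝ := norm2 h01 with hdefX
    set E : ℝ := e₀ / Real.sqrt s with hdefE
    have hEnn : 0 ≤ E := div_nonneg he₀ hsqs.le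
    have hEX : S ≤ X + 2 * E := by
      rw [hdefE, hdefX]
      have : 2 * e₀ / Real.sqrt s = 2 * (e₀ / Real.sqrt s) := by ring
      rw [this] at hScone
      exact hScone
    have hXbound : d * X ≤ 2 * Real.sqrt (1 + δ) * ε + 2 * Real.sqrt 2 * δ * E := by
      rcases eq_or_lt_of_le hXnn with hX0 | hX0
      · rw [← hX0, mul_zero]
        have b1 : 0 ≤ 2 * Real.sqrt (1 + δ) * ε :=
          mul_nonneg (mul_nonneg (by norm_num) (Real.sqrt_nonneg _)) hε
        have b2 : 0 ≤ 2 * Real.sqrt 2 * δ * E :=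
          mul_nonneg (mul_nonneg (mul_nonneg (by norm_num) hs2pos.le) hδ0) hEnn
        linarith
      · have t3' : ((1 - δ) * X) * X ≤
            (2 * Real.sqrt (1 + δ) * ε + Real.sqrt 2 * δ * S) * X := by
          nlinarith [hmain]
        have t3 : (1 - δ) * X ≤ 2 * Real.sqrt (1 + δ) * ε + Real.sqrt 2 * δ * S :=
          le_of_mul_le_mul_right t3' hX0
        have t4 : Real.sqrt 2 * δ * S ≤ Real.sqrt 2 * δ * (X + 2 * E) := by
          apply mul_le_mul_of_nonneg_left hEX
          exact mul_nonneg hs2pos.le hδ0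
        rw [hdefd]
        nlinarith [t3, t4]
    -- final combination
    have hdne : (1 - (Real.sqrt 2 + 1) * δ) ≠ 0 := by
      rw [← hdefd]
      exact ne_of_gt hd0
    have hdC1 : d * C1 δ = 4 * Real.sqrt (1 + δ) := by
      rw [C1, ← hdefd]
      field_simp
    have hdC2 : d * C2 δ = 2 * (1 + (Real.sqrt 2 - 1) * δ) := by
      rw [C2, ← hdefd]
      field_simp
    have target : d * (2 * X + 2 * E) ≤ d * (C1 δ * ε + C2 δ * E) := by
      have e1 : d * (C1 δ * ε + C2 δ * E) = (d * C1 δ) * ε + (d * C2 δ) * E := by ring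
      rw [e1, hdC1, hdC2]
      have hXb2 := hXbound
      rw [hdefd] at hXb2 ⊢
      nlinarith [hXb2, hEnn]
    have hfinal : 2 * X + 2 * E ≤ C1 δ * ε + C2 δ * E :=
      le_of_mul_le_mul_left (by linarith [target]) hd0
    have htri : norm2 h ≤ X + norm2 hrest := by
      have hfe : h = fun i => h01 i + hrest i := funext hsplith
      rw [hfe, hdefX]
      exact norm2_add_le _ _
    have : norm2 h ≤ 2 * X + 2 * E := by
      have := hrestle
      linarith [hEX]
    calc norm2 h ≤ 2 * X + 2 * E := this
    _ ≤ C1 δ * ε + C2 δ * E := hfinal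
    _ = C1 δ * ε + C2 δ * e₀ / Real.sqrt s := by rw [hdefE]; ring

end Chunk7





section Chunk8
variable {n m : ℕ} (A : Matrix (Fin n) (Fin m) ℝ)

lemma mulVec_fun_sub (f g : Fin m → ℝ) :
    A.mulVec (fun i => f i - g i) = fun j => A.mulVec f j - A.mulVec g j := by
  have : (fun i => f i - g i) = f - g := rfl
  rw [this, Matrix.mulVec_sub]
  rfl

lemma norm2_sub_le {k : ℕ} (u v : Fin k → ℝ) :
    norm2 (fun i => u i - v i) ≤ norm2 u + norm2 v := by
  have : toE (fun i => u i - v i) = toE u - toE v := rfl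
  rw [norm2_eq_norm, norm2_eq_norm, norm2_eq_norm, this]
  exact norm_sub_le _ _

end Chunk8


set_option maxHeartbeats 2000000

/-- detection condition for LS-CS (Lemma 9). -/
theorem lscs_detection_condition {n m : ℕ} (A : Matrix (Fin n) (Fin m) ℝ)
    (x : Fin m → ℝ) (w : Fin n → ℝ) (ε δ δ' θ γ κ b αadd : ℝ) (T : Finset (Fin m))
    (ST SΔ SΔ1 : ℕ)
    (hw : norm2 w ≤ ε)
    (hne : (spt x \ T).Nonempty)
    (hT : T.card ≤ ST)
    (hΔ : (spt x \ T).card ≤ SΔ)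
    (hb : b = (spt x \ T).sup' hne (fun i => |x i|))
    (hγ0 : 0 < γ) (hγ1 : γ ≤ 1)
    (hΔ1 : ((spt x \ T).filter (fun i => γ * b ≤ |x i|)).card ≤ SΔ1)
    (hΔ2 : norm2 (restr ((spt x \ T) \ ((spt x \ T).filter (fun i => γ * b ≤ |x i|))) x) ≤ κ * b)
    (hδ : δ < (Real.sqrt 2 - 1) / 2)
    (hRIP : RIPBound A (2 * SΔ) δ)
    (hδ' : δ' < 1 / 2)
    (hRIP' : RIPBound A ST δ')
    (hθ : ROBound A ST SΔ θ)
    (xinit : Fin m → ℝ)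
    (hinit : IsLS A (fun j => (A.mulVec x) j + w j) T xinit)
    (betahat : Fin m → ℝ)
    (hbeta : ModCS A
      (fun j => ((A.mulVec x) j + w j) - (A.mulVec xinit) j) ε (∅ : Finset (Fin m)) betahat)
    (hθC : θ * (2 * C2 δ * Real.sqrt (ST : ℝ)) ≤ γ / (2 * (Real.sqrt (SΔ1 : ℝ) + κ)))
    (hdet : αadd + (C1 δ + Real.sqrt 2 * C2 δ *
        Real.sqrt ((ST : ℝ) / ((spt x \ T).card : ℝ))) * ε <
      (γ - θ * (2 * C2 δ * Real.sqrt (ST : ℝ)) * (Real.sqrt (SΔ1 : ℝ) + κ)) * b) :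
    ∀ i ∈ (spt x \ T).filter (fun i => γ * b ≤ |x i|), αadd < |xinit i + betahat i| := by
  classical
  intro i₀ hi₀
  obtain ⟨hs2gt, hs2sq⟩ := sqrt2_facts
  have hs2pos : (0:ℝ) < Real.sqrt 2 := by linarith
  have hε0 : 0 ≤ ε := le_trans (norm2_nonneg w) hw
  have hδ0 : 0 ≤ δ := hRIP.1
  have hθ0 : 0 ≤ θ := hθ.1
  set Δ : Finset (Fin m) := spt x \ T with hdefΔ
  set Δ₁ : Finset (Fin m) := Δ.filter (fun i => γ * b ≤ |x i|) with hdefΔ₁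
  set Δ₂ : Finset (Fin m) := Δ \ Δ₁ with hdefΔ₂
  have hd0' : 0 < 1 - (Real.sqrt 2 + 1) * δ := by nlinarith
  have hC2nn : 0 ≤ C2 δ := by
    rw [C2]
    apply div_nonneg _ (le_of_lt hd0')
    nlinarith
  -- b is positive
  have hbpos : 0 < b := by
    obtain ⟨j, hj⟩ := hne
    have hxj : x j ≠ 0 := mem_spt.mp (Finset.mem_sdiff.mp hj).1
    have : |x j| ≤ b := hb ▸ Finset.le_sup' (fun i => |x i|) hj
    have : 0 < |x j| := abs_pos.mpr hxj
    linarith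
  have hκ0 : 0 ≤ κ := by
    have h0 := norm2_nonneg (restr Δ₂ x)
    have := hΔ2
    nlinarith
  -- the error of the LS estimate and the sparse part
  set βv : Fin m → ℝ := fun i => x i - xinit i with hdefβ
  set βT : Fin m → ℝ := restr T βv with hdefβT
  set xΔ : Fin m → ℝ := restr Δ x with hdefxΔ
  have hβdecomp : ∀ i, βv i = βT i + xΔ i := by
    intro i
    by_cases hiT : i ∈ T
    · have h1 : βT i = βv i := restr_apply_mem hiT
      have h2 : xΔ i = 0 := restr_apply_not_mem (by
        intro hc
        exact (Finset.mem_sdiff.mp hc).2 hiT)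
      rw [h1, h2, add_zero]
    · have h1 : βT i = 0 := restr_apply_not_mem hiT
      have hxinit0 : xinit i = 0 := hinit.1 i hiT
      by_cases hiΔ : i ∈ Δ
      · have h2 : xΔ i = x i := restr_apply_mem hiΔ
        rw [h1, h2, zero_add, hdefβ]
        simp [hxinit0]
      · have hx0 : x i = 0 := by
          by_contra hc
          exact hiΔ (Finset.mem_sdiff.mpr ⟨mem_spt.mpr hc, hiT⟩)
        have h2 : xΔ i = 0 := restr_apply_not_mem hiΔ
        rw [h1, h2, hdefβ]
        simp [hx0, hxinit0]
  -- LS step bound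
  have hsptxΔ : spt xΔ ⊆ Δ := spt_restr_subset _ _
  have hLS : norm2 βT ≤ 2 * θ * norm2 xΔ + Real.sqrt 2 * ε := by
    apply ls_step_bound A hRIP' hδ' hθ hT βT xΔ w
    · intro i hiT
      exact restr_apply_not_mem hiT
    · refine Finset.disjoint_right.mpr ?_
      intro a ha haT
      exact (Finset.mem_sdiff.mp (hsptxΔ ha)).2 haT
    · exact le_trans (Finset.card_le_card hsptxΔ) hΔ
    · exact hw
    · intro i hiT
      have hn := hinit.2 i hiT
      have hptwise : ∀ j, ((A.mulVec x) j + w j) - (A.mulVec xinit) j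
          = A.mulVec βT j + A.mulVec xΔ j + w j := by
        intro j
        have e1 : A.mulVec βv j = A.mulVec x j - A.mulVec xinit j :=
          congrFun (mulVec_fun_sub A x xinit) j
        have e2 : A.mulVec βv j = A.mulVec βT j + A.mulVec xΔ j := by
          have : βv = fun i => βT i + xΔ i := funext hβdecomp
          rw [this]
          exact congrFun (mulVec_fun_add A βT xΔ) j
        rw [← e2, e1]
        ring
      rw [← hn]
      apply Finset.sum_congr rfl
      intro j _
      rw [hptwise j]
  -- CS bound
  set h : Fin m → ℝ := fun i => betahat i - βv i with hdefhh
  have hΔne : Δ.Nonempty := hne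
  have hΔcard : Δ.card ≤ SΔ := hΔ
  have hytilde : ∀ j, (((A.mulVec x) j + w j) - (A.mulVec xinit) j) - A.mulVec βv j = w j := by
    intro j
    have e1 : A.mulVec βv j = A.mulVec x j - A.mulVec xinit j :=
      congrFun (mulVec_fun_sub A x xinit) j
    rw [e1]
    ring
  have hfeas : norm2 (fun j => (((A.mulVec x) j + w j) - (A.mulVec xinit) j)
      - A.mulVec βv j) ≤ ε := by
    have : (fun j => (((A.mulVec x) j + w j) - (A.mulVec xinit) j) - A.mulVec βv j) = w :=
      funext hytilde
    rw [this]
    exact hw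
  have hl1 : ∑ i, |betahat i| ≤ ∑ i, |βv i| := by
    have := hbeta.2 βv hfeas
    simpa using this
  have hAh : norm2 (A.mulVec (fun i => betahat i - βv i)) ≤ 2 * ε := by
    have hsplit : ∀ j, A.mulVec (fun i => betahat i - βv i) j =
        ((((A.mulVec x) j + w j) - (A.mulVec xinit) j) - A.mulVec βv j)
        - ((((A.mulVec x) j + w j) - (A.mulVec xinit) j) - A.mulVec betahat j) := by
      intro j
      have e1 : A.mulVec (fun i => betahat i - βv i) j
          = A.mulVec betahat j - A.mulVec βv j :=
        congrFun (mulVec_fun_sub A betahat βv) j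
      rw [e1]
      ring
    have e2 : A.mulVec (fun i => betahat i - βv i) = fun j =>
        ((((A.mulVec x) j + w j) - (A.mulVec xinit) j) - A.mulVec βv j)
        - ((((A.mulVec x) j + w j) - (A.mulVec xinit) j) - A.mulVec betahat j) :=
      funext hsplit
    rw [e2]
    calc norm2 _ ≤ norm2 (fun j => (((A.mulVec x) j + w j) - (A.mulVec xinit) j) - A.mulVec βv j)
        + norm2 (fun j => (((A.mulVec x) j + w j) - (A.mulVec xinit) j) - A.mulVec betahat j) :=
          norm2_sub_le _ _
    _ ≤ ε + ε := add_le_add hfeas hbeta.1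
    _ = 2 * ε := by ring
  have hCS := cs_bound A hRIP hδ βv betahat Δ hΔne hΔcard hAh hl1 hε0
  -- bound e₀ = ∑_{Δᶜ} |βv|
  have he₀T : ∑ i ∈ Δᶜ, |βv i| = ∑ i ∈ T, |βv i| := by
    apply (Finset.sum_subset ?_ ?_).symm
    · intro i hiT
      rw [Finset.mem_compl]
      intro hc
      exact (Finset.mem_sdiff.mp hc).2 hiT
    · intro i hic hiT
      have h1 : βT i = 0 := restr_apply_not_mem hiT
      have h2 := hβdecomp i
      have hiΔ : i ∉ Δ := Finset.mem_compl.mp hic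
      have h3 : xΔ i = 0 := restr_apply_not_mem hiΔ
      rw [h1, h3] at h2
      simp [h2]
  have he₀ : ∑ i ∈ Δᶜ, |βv i| ≤ Real.sqrt ST * norm2 βT := by
    rw [he₀T]
    calc ∑ i ∈ T, |βv i| ≤ Real.sqrt T.card * norm2 (restr T βv) :=
          l1_le_sqrt_card_mul_norm2 T βv
    _ ≤ Real.sqrt ST * norm2 βT := by
          apply mul_le_mul_of_nonneg_right _ (norm2_nonneg _)
          exact Real.sqrt_le_sqrt (by exact_mod_cast hT)
  -- bound on ‖xΔ‖
  have hxΔnorm : norm2 xΔ ≤ (Real.sqrt SΔ1 + κ) * b := by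
    have hsub : Δ₁ ⊆ Δ := Finset.filter_subset _ _
    have hunion : Δ₁ ∪ Δ₂ = Δ := Finset.union_sdiff_of_subset hsub
    have hdisj : Disjoint Δ₁ Δ₂ := Finset.disjoint_sdiff
    have hsplit : xΔ = fun i => restr Δ₁ x i + restr Δ₂ x i := by
      rw [hdefxΔ, ← hunion]
      exact restr_union_of_disjoint hdisj x
    have hb1 : ∀ i ∈ Δ₁, |x i| ≤ b := by
      intro i hi
      exact hb ▸ Finset.le_sup' (fun i => |x i|) (hsub hi)
    have h1 : norm2 (restr Δ₁ x) ≤ Real.sqrt Δ₁.card * b :=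
      norm2_restr_le_of_forall_le hbpos.le hb1
    have h2 : Real.sqrt Δ₁.card ≤ Real.sqrt SΔ1 := Real.sqrt_le_sqrt (by exact_mod_cast hΔ1)
    calc norm2 xΔ ≤ norm2 (restr Δ₁ x) + norm2 (restr Δ₂ x) := by
          rw [hsplit]
          exact norm2_add_le _ _
    _ ≤ Real.sqrt SΔ1 * b + κ * b := by
          have := mul_le_mul_of_nonneg_right h2 hbpos.le
          linarith [hΔ2]
    _ = (Real.sqrt SΔ1 + κ) * b := by ring
  -- numbers
  have hs'1 : 1 ≤ Δ.card := Finset.card_pos.mpr hΔne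
  have hs'0 : (0:ℝ) < (Δ.card : ℝ) := by exact_mod_cast hs'1
  have hsqs' : 0 < Real.sqrt (Δ.card : ℝ) := Real.sqrt_pos.mpr hs'0
  have hsqs'1 : 1 ≤ Real.sqrt (Δ.card : ℝ) := by
    nlinarith [Real.sq_sqrt hs'0.le, hsqs', hs'0, (by exact_mod_cast hs'1 : (1:ℝ) ≤ (Δ.card:ℝ))]
  have hsqrtdiv : Real.sqrt ((ST:ℝ)/((Δ.card:ℝ))) = Real.sqrt ST / Real.sqrt (Δ.card:ℝ) :=
    Real.sqrt_div (Nat.cast_nonneg _) _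
  have hSΔκ : 0 ≤ Real.sqrt SΔ1 + κ := by positivity
  -- assemble the error bound
  have hβTb : norm2 βT ≤ 2 * θ * ((Real.sqrt SΔ1 + κ) * b) + Real.sqrt 2 * ε := by
    have := mul_le_mul_of_nonneg_left hxΔnorm (by linarith : (0:ℝ) ≤ 2 * θ)
    linarith [hLS]
  have hterm : C2 δ * (∑ i ∈ Δᶜ, |βv i|) / Real.sqrt (Δ.card : ℝ) ≤
      θ * (2 * C2 δ * Real.sqrt ST) * (Real.sqrt SΔ1 + κ) * b +
      Real.sqrt 2 * C2 δ * Real.sqrt ((ST:ℝ)/((Δ.card:ℝ))) * ε := by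
    have hnum : C2 δ * (∑ i ∈ Δᶜ, |βv i|) ≤
        C2 δ * (Real.sqrt ST * (2 * θ * ((Real.sqrt SΔ1 + κ) * b) + Real.sqrt 2 * ε)) := by
      apply mul_le_mul_of_nonneg_left _ hC2nn
      calc ∑ i ∈ Δᶜ, |βv i| ≤ Real.sqrt ST * norm2 βT := he₀
      _ ≤ Real.sqrt ST * (2 * θ * ((Real.sqrt SΔ1 + κ) * b) + Real.sqrt 2 * ε) :=
          mul_le_mul_of_nonneg_left hβTb (Real.sqrt_nonneg _)
    have hdiv : C2 δ * (∑ i ∈ Δᶜ, |βv i|) / Real.sqrt (Δ.card : ℝ) ≤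
        C2 δ * (Real.sqrt ST * (2 * θ * ((Real.sqrt SΔ1 + κ) * b) + Real.sqrt 2 * ε))
          / Real.sqrt (Δ.card : ℝ) := by
      exact div_le_div_of_nonneg_right hnum hsqs'.le |>.trans_eq rfl
    have hsplit2 : C2 δ * (Real.sqrt ST * (2 * θ * ((Real.sqrt SΔ1 + κ) * b) + Real.sqrt 2 * ε))
          / Real.sqrt (Δ.card : ℝ)
        = (θ * (2 * C2 δ * Real.sqrt ST) * (Real.sqrt SΔ1 + κ) * b) / Real.sqrt (Δ.card : ℝ)
          + Real.sqrt 2 * C2 δ * (Real.sqrt ST / Real.sqrt (Δ.card : ℝ)) * ε := by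
      simp only [div_eq_mul_inv]
      ring
    have hfirst : (θ * (2 * C2 δ * Real.sqrt ST) * (Real.sqrt SΔ1 + κ) * b)
          / Real.sqrt (Δ.card : ℝ)
        ≤ θ * (2 * C2 δ * Real.sqrt ST) * (Real.sqrt SΔ1 + κ) * b := by
      apply div_le_self _ hsqs'1
      have : 0 ≤ Real.sqrt (ST:ℝ) := Real.sqrt_nonneg _
      positivity
    calc C2 δ * (∑ i ∈ Δᶜ, |βv i|) / Real.sqrt (Δ.card : ℝ)
        ≤ C2 δ * (Real.sqrt ST * (2 * θ * ((Real.sqrt SΔ1 + κ) * b) + Real.sqrt 2 * ε))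
          / Real.sqrt (Δ.card : ℝ) := hdiv
    _ = (θ * (2 * C2 δ * Real.sqrt ST) * (Real.sqrt SΔ1 + κ) * b) / Real.sqrt (Δ.card : ℝ)
          + Real.sqrt 2 * C2 δ * (Real.sqrt ST / Real.sqrt (Δ.card : ℝ)) * ε := hsplit2
    _ ≤ θ * (2 * C2 δ * Real.sqrt ST) * (Real.sqrt SΔ1 + κ) * b
          + Real.sqrt 2 * C2 δ * Real.sqrt ((ST:ℝ)/((Δ.card:ℝ))) * ε := by
          rw [hsqrtdiv]
          linarith [hfirst]
  -- final coordinate estimate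
  have hnormh : norm2 h ≤
      (C1 δ + Real.sqrt 2 * C2 δ * Real.sqrt ((ST:ℝ)/((Δ.card:ℝ)))) * ε
      + θ * (2 * C2 δ * Real.sqrt ST) * (Real.sqrt SΔ1 + κ) * b := by
    have := hCS
    have e1 : (C1 δ + Real.sqrt 2 * C2 δ * Real.sqrt ((ST:ℝ)/((Δ.card:ℝ)))) * ε
        = C1 δ * ε + Real.sqrt 2 * C2 δ * Real.sqrt ((ST:ℝ)/((Δ.card:ℝ))) * ε := by ring
    rw [e1]
    linarith [hterm]
  have hxi : γ * b ≤ |x i₀| := (Finset.mem_filter.mp hi₀).2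
  have hco : |h i₀| ≤ norm2 h := coord_le_norm2 h i₀
  have habs : |x i₀| ≤ |xinit i₀ + betahat i₀| + |h i₀| := by
    have e1 : x i₀ = (xinit i₀ + betahat i₀) - h i₀ := by
      rw [hdefhh, hdefβ]
      ring
    calc |x i₀| = |(xinit i₀ + betahat i₀) - h i₀| := by rw [← e1]
    _ ≤ |xinit i₀ + betahat i₀| + |h i₀| := abs_sub _ _
  have hdet' : αadd + (C1 δ + Real.sqrt 2 * C2 δ *
      Real.sqrt ((ST : ℝ) / ((Δ.card : ℝ)))) * ε <
      (γ - θ * (2 * C2 δ * Real.sqrt (ST : ℝ)) * (Real.sqrt (SΔ1 : ℝ) + κ)) * b := hdet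
  nlinarith [hdet', hnormh, hco, hxi, habs]
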